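/- arXiv:1212.0266 — 9 statements merged into one kernel-verified Lean document; each statement's English description precedes it below -/
import Mathlib

section
/- Let (R, D) be a commutative differential k-algebra of weight λ (D linear, D(xy) = D(x)y + xD(y) + λD(x)D(y), D(1)=0) with a linear operator Π: R → R satisfying D∘Π = id_R. Set J = Π∘D. Then the Rota-Baxter identity Π(x)Π(y) = Π(xΠ(y)) + Π(Π(x)y) + λΠ(xy) holds for all x,y if and only if Π(x)Π(y) = J(Π(x)Π(y)) for all x,y. -/
/-- With J = Π∘D, the Rota-Baxter identity for Π is equivalent to
Π(x)Π(y) = J(Π(x)Π(y)). -/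
theorem stmt_2 {k R : Type*} [CommRing k] [CommRing R] [Algebra k R]
    (l : k) (D P : R →ₗ[k] R)
    (hleib : ∀ x y, D (x * y) = D x * y + x * D y + l • (D x * D y))
    (hone : D 1 = 0)
    (hsec : ∀ x, D (P x) = x) :
    (∀ x y, P x * P y = P (x * P y) + P (P x * y) + l • P (x * y)) ↔
      (∀ x y, P x * P y = P (D (P x * P y))) := by
  have key : ∀ x y, P (D (P x * P y)) = P (x * P y) + P (P x * y) + l • P (x * y) := by
    intro x y
    rw [hleib, hsec, hsec, map_add, map_add, map_smul]
  constructor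
  · intro h x y; rw [key, h]
  · intro h x y; rw [← key, ← h]
end

section
/- Let (R, D) be a commutative differential k-algebra of weight λ with a linear operator Π satisfying D∘Π = id_R, and set J = Π∘D. Then Π(x)Π(y) = J(Π(x)Π(y)) holds for all x, y ∈ R if and only if J(x)J(y) = J(J(x)J(y)) holds for all x, y ∈ R. -/
/-- With J = Π∘D: Π(x)Π(y) = J(Π(x)Π(y)) for all x,y iff
J(x)J(y) = J(J(x)J(y)) for all x,y. -/
theorem stmt_3 {k R : Type*} [CommRing k] [CommRing R] [Algebra k R]
    (l : k) (D P : R →ₗ[k] R)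
    (hleib : ∀ x y, D (x * y) = D x * y + x * D y + l • (D x * D y))
    (hone : D 1 = 0)
    (hsec : ∀ x, D (P x) = x) :
    (∀ x y, P x * P y = P (D (P x * P y))) ↔
      (∀ x y, P (D x) * P (D y) = P (D (P (D x) * P (D y)))) := by
  constructor
  · intro h x y; exact h (D x) (D y)
  · intro h x y
    have := h (P x) (P y)
    rwa [hsec, hsec] at this
end

section
/- Every commutative integro-differential k-algebra of weight λ is a differential Rota-Baxter algebra of weight λ; that is, if (R, D, Π) satisfies D∘Π = id_R and the hybrid Rota-Baxter axiom Π(D(x))Π(D(y)) = Π(D(x))y + xΠ(D(y)) - Π(D(xy)) for all x, y, then Π satisfies the Rota-Baxter identity Π(x)Π(y) = Π(xΠ(y)) + Π(Π(x)y) + λΠ(xy) for all x, y. -/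
/-- Every commutative integro-differential k-algebra of weight λ is a
differential Rota-Baxter algebra of weight λ. -/
theorem stmt_4 {k R : Type*} [CommRing k] [CommRing R] [Algebra k R]
    (l : k) (D P : R →ₗ[k] R)
    (hleib : ∀ x y, D (x * y) = D x * y + x * D y + l • (D x * D y))
    (hone : D 1 = 0)
    (hsec : ∀ x, D (P x) = x)
    (hhybrid : ∀ x y, P (D x) * P (D y) =
      P (D x) * y + x * P (D y) - P (D (x * y))) :
    ∀ x y, P x * P y = P (x * P y) + P (P x * y) + l • P (x * y) := by
  intro x y
  have h := hhybrid (P x) (P y)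
  rw [hsec, hsec] at h
  have hfix : P (D (P x * P y)) = P x * P y := by linear_combination h
  have hD : D (P x * P y) = x * P y + P x * y + l • (x * y) := by
    rw [hleib, hsec, hsec]
  rw [hD, map_add, map_add, map_smul] at hfix
  linear_combination -hfix
end

section
/- Let (R, D, Π) with D a weight-λ derivation and D∘Π = id_R, J = Π∘D. Then the hybrid Rota-Baxter axiom (J(x)J(y) = J(x)y + xJ(y) − J(xy) for all x,y) holds if and only if J(xJ(y)) = xJ(y) and J(J(x)y) = J(x)y hold for all x, y ∈ R. -/
/-- With J = Π∘D: the hybrid Rota-Baxter axiom holds iff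
J(xJ(y)) = xJ(y) and J(J(x)y) = J(x)y for all x, y. -/
theorem stmt_7 {k R : Type*} [CommRing k] [CommRing R] [Algebra k R]
    (l : k) (D P : R →ₗ[k] R)
    (hleib : ∀ x y, D (x * y) = D x * y + x * D y + l • (D x * D y))
    (hone : D 1 = 0)
    (hsec : ∀ x, D (P x) = x) :
    (∀ x y, P (D x) * P (D y) =
        P (D x) * y + x * P (D y) - P (D (x * y))) ↔
      ((∀ x y, P (D (x * P (D y))) = x * P (D y)) ∧
        (∀ x y, P (D (P (D x) * y)) = P (D x) * y)) := by
  constructor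
  · intro h
    constructor
    · intro x y
      have h1 := h x (P (D y))
      simp only [hsec] at h1
      linear_combination h1
    · intro x y
      have h1 := h (P (D x)) y
      simp only [hsec] at h1
      linear_combination h1
  · rintro ⟨h1, h2⟩ x y
    have e1 := h1 x y
    have e2 := h2 x y
    have e3 := h2 x (P (D y))
    simp only [hleib, hsec, map_add, map_smul] at e1 e2 e3 ⊢
    linear_combination e1 + e2 - e3
end

section
/- Let (R, D, Π) with D a weight-λ derivation and D∘Π = id_R. Then the hybrid Rota-Baxter axiom holds if and only if the weighted integration-by-parts identities hold: xΠ(y) = Π(D(x)Π(y)) + Π(xy) + λΠ(D(x)y) and Π(x)y = Π(Π(x)D(y)) + Π(xy) + λΠ(xD(y)) for all x, y ∈ R. -/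
/-- The hybrid Rota-Baxter axiom holds iff the weighted integration-by-parts
identities hold. -/
theorem stmt_8 {k R : Type*} [CommRing k] [CommRing R] [Algebra k R]
    (l : k) (D P : R →ₗ[k] R)
    (hleib : ∀ x y, D (x * y) = D x * y + x * D y + l • (D x * D y))
    (hone : D 1 = 0)
    (hsec : ∀ x, D (P x) = x) :
    (∀ x y, P (D x) * P (D y) =
        P (D x) * y + x * P (D y) - P (D (x * y))) ↔
      ((∀ x y, x * P y = P (D x * P y) + P (x * y) + l • P (D x * y)) ∧
        (∀ x y, P x * y = P (P x * D y) + P (x * y) + l • P (x * D y))) := by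
  have hexp : ∀ x y : R, P (D (x * y)) =
      P (D x * y) + P (x * D y) + l • P (D x * D y) := by
    intro x y
    rw [hleib, map_add, map_add, map_smul]
  simp only [Algebra.smul_def] at *
  constructor
  · intro h
    constructor
    · intro x y
      have h1 := h x (P y)
      rw [hsec] at h1
      have h2 : x * P y = P (D (x * P y)) := by linear_combination -h1
      rw [h2, hexp, hsec]
    · intro x y
      have h1 := h (P x) y
      rw [hsec] at h1
      have h2 : P x * y = P (D (P x * y)) := by linear_combination -h1
      rw [h2, hexp, hsec]
      ring
  · rintro ⟨h1, h2⟩ x y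
    have e1 := h1 (P (D x)) (D y)
    rw [hsec] at e1
    have e2 := h2 (D x) y
    have e3 := h1 x (D y)
    rw [hexp]
    linear_combination e1 - e2 - e3
end

section
/- Let (R, D, Π) with D a weight-λ derivation, D∘Π = id_R, J = Π∘D, E = id_R − J. Then (R, D, Π) is an integro-differential algebra (satisfies the hybrid Rota-Baxter axiom) if and only if (R, D, Π) is a differential Rota-Baxter algebra and Π(E(x)y) = E(x)Π(y) and Π(xE(y)) = Π(x)E(y) for all x, y ∈ R. -/
/-- With J = Π∘D and E = id − J: the hybrid Rota-Baxter axiom holds iff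
(R, D, Π) is a differential Rota-Baxter algebra and Π is E-bilinear:
Π(E(x)y) = E(x)Π(y) and Π(xE(y)) = Π(x)E(y). -/
theorem stmt_9 {k R : Type*} [CommRing k] [CommRing R] [Algebra k R]
    (l : k) (D P : R →ₗ[k] R)
    (hleib : ∀ x y, D (x * y) = D x * y + x * D y + l • (D x * D y))
    (hone : D 1 = 0)
    (hsec : ∀ x, D (P x) = x) :
    (∀ x y, P (D x) * P (D y) =
        P (D x) * y + x * P (D y) - P (D (x * y))) ↔
      ((∀ x y, P x * P y = P (x * P y) + P (P x * y) + l • P (x * y)) ∧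
        (∀ x y, P ((x - P (D x)) * y) = (x - P (D x)) * P y) ∧
        (∀ x y, P (x * (y - P (D y))) = P x * (y - P (D y)))) := by
  constructor
  · intro h
    have key : ∀ x y, P ((x - P (D x)) * y) = (x - P (D x)) * P y := by
      intro x y
      have hDe : D (x - P (D x)) = 0 := by rw [map_sub, hsec, sub_self]
      have h1 := h (x - P (D x)) (P y)
      have h2 : D ((x - P (D x)) * P y) = (x - P (D x)) * y := by
        rw [hleib, hDe, hsec]; simp
      rw [h2, hDe] at h1
      simp only [hsec, map_zero, zero_mul] at h1
      linear_combination h1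
    refine ⟨?_, key, ?_⟩
    · intro x y
      have h1 := h (P x) (P y)
      have h2 : D (P x * P y) = x * P y + P x * y + l • (x * y) := by
        rw [hleib, hsec, hsec]
      rw [h2, map_add, map_add, map_smul] at h1
      simp only [hsec] at h1
      linear_combination -h1
    · intro x y
      have := key y x
      rw [mul_comm x (y - P (D y)), mul_comm (P x) (y - P (D y))]
      exact this
  · rintro ⟨hRB, hEl, hEr⟩ x y
    have h1 := hRB (D x) (D y)
    have h2 := hEr (D x) y
    have h3 := hEl x (D y)
    rw [mul_sub, map_sub] at h2
    rw [sub_mul, map_sub] at h3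
    rw [hleib, map_add, map_add, map_smul]
    linear_combination h2 + h3 - h1
end

section
/- For the derivation D of weight 0 on the ring of differential polynomials A = k{u} = k[u₀, u₁, u₂, …] (with D(u_i) = u_{i+1} extended by the Leibniz rule), if x ∈ A is a nonzero differential polynomial of order k ≥ 0, then D(x) is not a k-linear combination of functional monomials; in particular A_T ∩ im D = 0, where A_T is the k-submodule spanned by functional monomials. -/
open MvPolynomial

/-- A monomial exponent `α` is functional if its order is at most 0
(i.e. it only involves `u₀`) or the exponent of the highest variable is > 1. -/
def IsFunctionalMono (α : ℕ →₀ ℕ) : Prop :=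
  (∀ i, 1 ≤ i → α i = 0) ∨ ∃ m, 1 < α m ∧ ∀ i, m < i → α i = 0

/-- The submodule of a ring of differential polynomials spanned by the
functional monomials. -/
noncomputable def functionalSubmodule (k : Type*) [CommRing k] :
    Submodule k (MvPolynomial ℕ k) :=
  Submodule.span k {p | ∃ α : ℕ →₀ ℕ, IsFunctionalMono α ∧
    p = monomial α (1 : k)}

lemma aux_apply (δ : ℕ →₀ ℕ) (a b j : ℕ) :
    ((δ - Finsupp.single a 1 + Finsupp.single b 1 : ℕ →₀ ℕ)) j
      = δ j - (if a = j then 1 else 0) + (if b = j then 1 else 0) := by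
  rw [Finsupp.add_apply, Finsupp.tsub_apply, Finsupp.single_apply, Finsupp.single_apply]

lemma key_lemma {k : Type*} [CommRing k] [Algebra ℚ k] (x : MvPolynomial ℕ k)
    (hx : x ∉ Set.range (MvPolynomial.C : k →+* MvPolynomial ℕ k)) :
    ∃ γ : ℕ →₀ ℕ, ¬ IsFunctionalMono γ ∧
      coeff γ ((MvPolynomial.mkDerivation k
        (fun i => (X (i + 1) : MvPolynomial ℕ k))) x) ≠ 0 := by
  have hvars : x.vars.Nonempty := by
    rw [Finset.nonempty_iff_ne_empty]
    intro h
    apply hx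
    refine ⟨coeff 0 x, ?_⟩
    ext β
    rw [coeff_C]
    split_ifs with h0
    · rw [← h0]
    · by_contra hβ
      have hβ' : β ∈ x.support := mem_support_iff.mpr fun hc => hβ (hc ▸ rfl)
      obtain ⟨i, hi⟩ := Finsupp.support_nonempty_iff.mpr (fun hc => h0 (hc ▸ rfl)) 
      have : i ∈ x.vars := (mem_vars i).mpr ⟨β, hβ', hi⟩
      simp [h] at this
  set m := x.vars.max' hvars with hm
  have hm_mem : m ∈ x.vars := x.vars.max'_mem hvars
  obtain ⟨α, hαs, hαm⟩ := (mem_vars m).mp hm_mem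
  have htop : ∀ β ∈ x.support, ∀ j, m < j → β j = 0 := by
    intro β hβ j hj
    by_contra h
    have : j ∈ x.vars := (mem_vars j).mpr ⟨β, hβ, Finsupp.mem_support_iff.mpr h⟩
    exact absurd (x.vars.le_max' j this) (not_le.mpr hj)
  set γ : ℕ →₀ ℕ := α - Finsupp.single m 1 + Finsupp.single (m + 1) 1 with hγ
  have hγj : ∀ j, γ j = α j - (if m = j then 1 else 0) + (if m + 1 = j then 1 else 0) :=
    fun j => aux_apply α m (m + 1) j
  have hγ1 : γ (m + 1) = 1 := by
    rw [hγj, htop α hαs _ (by omega), if_neg (by omega), if_pos rfl]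
  have hγ_top : ∀ j, m + 1 < j → γ j = 0 := by
    intro j hj
    rw [hγj, htop α hαs j (by omega), if_neg (by omega), if_neg (by omega)]
  have hnf : ¬ IsFunctionalMono γ := by
    rintro (h | ⟨n, hn1, hn2⟩)
    · have := h (m + 1) (by omega); omega
    · rcases lt_trichotomy n (m + 1) with h' | h' | h'
      · have := hn2 (m + 1) h'; omega
      · rw [h'] at hn1; omega
      · have := hγ_top n h'; omega
  have hcond : ∀ β ∈ x.support, ∀ i ∈ β.support,
      ((β - Finsupp.single i 1 + Finsupp.single (i + 1) 1 = γ) ↔ (β = α ∧ i = m)) := by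
    intro β hβ i hi
    constructor
    · intro hEq
      have happ : ∀ j, ((β - Finsupp.single i 1 + Finsupp.single (i + 1) 1 : ℕ →₀ ℕ)) j = γ j :=
        fun j => by rw [hEq]
      have hi_le : i ≤ m := by
        by_contra h
        exact (Finsupp.mem_support_iff.mp hi) (htop β hβ i (by omega))
      have h1 := happ (m + 1)
      rw [aux_apply, hγ1, htop β hβ (m + 1) (by omega)] at h1
      have him : i = m := by
        by_contra h
        rw [if_neg (by omega), if_neg (by omega)] at h1
        omega
      subst him
      refine ⟨?_, rfl⟩
      ext j
      have h2 := happ j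
      rw [aux_apply, hγj j] at h2
      have hβm : β m ≠ 0 := Finsupp.mem_support_iff.mp hi
      have hαm' : α m ≠ 0 := Finsupp.mem_support_iff.mp hαm
      rcases eq_or_ne m j with rfl | hj <;> split_ifs at h2 <;> omega
    · rintro ⟨rfl, rfl⟩
      exact hγ.symm
  have hterm : ∀ β ∈ x.support,
      coeff γ ((MvPolynomial.mkDerivation k
          (fun i => (X (i + 1) : MvPolynomial ℕ k))) (monomial β (coeff β x)))
        = ∑ i ∈ β.support, if β - Finsupp.single i 1 + Finsupp.single (i + 1) 1 = γ
            then coeff β x * (β i : k) else 0 := by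
    intro β hβ
    rw [mkDerivation_monomial, coeff_smul, Finsupp.sum, coeff_sum, smul_eq_mul,
      Finset.mul_sum]
    refine Finset.sum_congr rfl fun i hi => ?_
    rw [smul_eq_mul, ← pow_one (X (i + 1) : MvPolynomial ℕ k), X_pow_eq_monomial,
      monomial_mul, mul_one, coeff_monomial]
    rw [mul_ite, mul_zero]
  have key : coeff γ ((MvPolynomial.mkDerivation k
      (fun i => (X (i + 1) : MvPolynomial ℕ k))) x) = coeff α x * (α m : k) := by
    conv_lhs => rw [← support_sum_monomial_coeff x]
    rw [map_sum, coeff_sum, Finset.sum_congr rfl hterm]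
    rw [Finset.sum_congr rfl fun β hβ => Finset.sum_congr rfl fun i hi =>
      if_congr (hcond β hβ i hi) rfl rfl]
    rw [Finset.sum_eq_single_of_mem α hαs (fun β _ hne => Finset.sum_eq_zero
      (fun i _ => if_neg (fun h => hne h.1)))]
    simp only [true_and]
    rw [Finset.sum_ite_eq' α.support m (fun i => coeff α x * (α i : k)), if_pos hαm]
  refine ⟨γ, hnf, ?_⟩
  rw [key]
  have hc : coeff α x ≠ 0 := mem_support_iff.mp hαs
  have hu : IsUnit ((α m : k)) := by
    have h1 : ((α m : ℚ)) ≠ 0 := Nat.cast_ne_zero.mpr (Finsupp.mem_support_iff.mp hαm)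
    have h2 := (isUnit_iff_ne_zero.mpr h1).map (algebraMap ℚ k)
    rwa [map_natCast] at h2
  exact fun h0 => hc (hu.mul_left_eq_zero.mp h0)

/-- For the weight-0 derivation D on k{u}: if x is not a constant (i.e. has
order ≥ 0), then D(x) is not a linear combination of functional monomials;
in particular A_T ∩ im D = 0. -/
theorem stmt_14 {k : Type*} [CommRing k] [Algebra ℚ k] :
    (∀ x : MvPolynomial ℕ k,
      x ∉ Set.range (MvPolynomial.C : k →+* MvPolynomial ℕ k) →
      (MvPolynomial.mkDerivation k (fun i => (X (i + 1) : MvPolynomial ℕ k))) x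
        ∉ functionalSubmodule k) ∧
    functionalSubmodule k ⊓
      LinearMap.range
        (MvPolynomial.mkDerivation k
          (fun i => (X (i + 1) : MvPolynomial ℕ k))).toLinearMap = ⊥ := by
  have part1 : ∀ x : MvPolynomial ℕ k,
      x ∉ Set.range (MvPolynomial.C : k →+* MvPolynomial ℕ k) →
      (MvPolynomial.mkDerivation k (fun i => (X (i + 1) : MvPolynomial ℕ k))) x
        ∉ functionalSubmodule k := by
    intro x hx hmem
    obtain ⟨γ, hnf, hne⟩ := key_lemma x hx
    have hle : functionalSubmodule k ≤ LinearMap.ker (lcoeff k γ) := by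
      rw [functionalSubmodule, Submodule.span_le]
      rintro p ⟨β, hβ, rfl⟩
      rw [SetLike.mem_coe, LinearMap.mem_ker, lcoeff_apply, coeff_monomial, if_neg]
      rintro rfl
      exact hnf hβ
    exact hne (hle hmem)
  refine ⟨part1, ?_⟩
  rw [eq_bot_iff]
  rintro y ⟨hy1, hy2⟩
  obtain ⟨x, rfl⟩ := hy2
  by_cases hx : x ∈ Set.range (MvPolynomial.C : k →+* MvPolynomial ℕ k)
  · obtain ⟨c, rfl⟩ := hx
    have h0 : (MvPolynomial.mkDerivation k
        (fun i => (X (i + 1) : MvPolynomial ℕ k))) (MvPolynomial.C c) = 0 := by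
      rw [← MvPolynomial.algebraMap_eq]
      exact Derivation.map_algebraMap _ c
    rw [Submodule.mem_bot]
    show (MvPolynomial.mkDerivation k
        (fun i => (X (i + 1) : MvPolynomial ℕ k))) (MvPolynomial.C c) = 0
    exact h0
  · exact absurd hy1 (part1 x hx)
end

section
/- Let A be a commutative k-algebra and DA the algebra of λ-Hurwitz series over A, i.e., functions f: ℕ → A with product (fg)(n) = Σ_{k=0}^{n} Σ_{j=0}^{n−k} C(n,k) C(n−k,j) λ^k f(n−j) g(k+j), with derivation (D f)(n) = f(n+1) and integral (Π f)(n) = f(n−1) for n ≥ 1, (Π f)(0) = 0. Then (DA, D, Π) is an integro-differential algebra of weight λ: D∘Π = id and Π(D(f))Π(D(g)) = Π(D(f))g + fΠ(D(g)) − Π(D(fg)) for all f, g. -/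
/-- The λ-Hurwitz product on A^ℕ:
(fg)(n) = Σ_{k=0}^{n} Σ_{j=0}^{n−k} C(n,k) C(n−k,j) λ^k f(n−j) g(k+j). -/
def hurwitzMul {R A : Type*} [CommRing R] [CommRing A] [Algebra R A]
    (l : R) (f g : ℕ → A) : ℕ → A :=
  fun n => ∑ m ∈ Finset.range (n + 1), ∑ j ∈ Finset.range (n - m + 1),
    (n.choose m * (n - m).choose j) • (l ^ m • (f (n - j) * g (m + j)))

/-- The derivation on λ-Hurwitz series: (D f)(n) = f(n+1). -/
def hurwitzDer {A : Type*} (f : ℕ → A) : ℕ → A := fun n => f (n + 1)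

/-- The integral on λ-Hurwitz series: (Π f)(n) = f(n−1) for n ≥ 1, and
(Π f)(0) = 0. -/
def hurwitzInt {A : Type*} [Zero A] (f : ℕ → A) : ℕ → A :=
  fun n => if n = 0 then 0 else f (n - 1)

lemma hurwitzIntDer {A : Type*} [CommRing A] (h : ℕ → A) :
    hurwitzInt (hurwitzDer h) = fun k => if k = 0 then 0 else h k := by
  funext k
  rcases k with _ | k <;> simp [hurwitzInt, hurwitzDer]

/-- The λ-Hurwitz series over A form an integro-differential algebra of
weight λ: D∘Π = id and the hybrid Rota-Baxter axiom holds. -/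
theorem stmt_18 {R A : Type*} [CommRing R] [CommRing A] [Algebra R A]
    (l : R) :
    (∀ f : ℕ → A, hurwitzDer (hurwitzInt f) = f) ∧
    (∀ f g : ℕ → A,
      hurwitzMul l (hurwitzInt (hurwitzDer f)) (hurwitzInt (hurwitzDer g)) =
        fun n =>
          hurwitzMul l (hurwitzInt (hurwitzDer f)) g n
            + hurwitzMul l f (hurwitzInt (hurwitzDer g)) n
            - hurwitzInt (hurwitzDer (hurwitzMul l f g)) n) := by
  constructor
  · intro f; funext n; simp [hurwitzDer, hurwitzInt]
  · intro f g
    funext n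
    rw [hurwitzIntDer f, hurwitzIntDer g, hurwitzIntDer (hurwitzMul l f g)]
    rcases Nat.eq_zero_or_pos n with hn | hn
    · subst hn
      simp [hurwitzMul]
    · simp only [hurwitzMul, if_neg hn.ne']
      rw [← Finset.sum_add_distrib, ← Finset.sum_sub_distrib]
      refine Finset.sum_congr rfl fun m hm => ?_
      rw [← Finset.sum_add_distrib, ← Finset.sum_sub_distrib]
      refine Finset.sum_congr rfl fun j hj => ?_
      rw [Finset.mem_range_succ_iff] at hm hj
      rw [← smul_add, ← smul_sub, ← smul_add, ← smul_sub]
      congr 2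
      by_cases h1 : n - j = 0
      · have h2 : m + j ≠ 0 := by omega
        simp [h1, h2, show ¬(m = 0 ∧ j = 0) by omega]
      · by_cases h2 : m + j = 0
        · simp [h1, h2]
        · simp [h1, h2]
end

section
/- Let A = ℂ[y]/(y⁴) and R = A[x] with the standard derivation d (d(x^k) = k x^{k−1}, d(y) = 0). Define P(f) = Π(f) + f(0,0)y², where Π is the usual integral with Π(x^k) = x^{k+1}/(k+1) extended A-linearly and f(0,0) denotes the coefficient evaluation at x = y = 0. Then (R, d, P) is a differential Rota-Baxter algebra of weight 0 (d∘P = id and P(f)P(g) = P(fP(g)) + P(P(f)g)), but it is not an integro-differential algebra: P(d(x))P(d(y)) ≠ P(d(x))y + xP(d(y)) − P(d(xy)), the difference being y³. -/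
open Polynomial

/-- The truncated polynomial ring A = ℂ[y]/(y⁴). -/
noncomputable abbrev TruncA : Type :=
  Polynomial ℂ ⧸ Ideal.span ({(X : Polynomial ℂ) ^ 4} : Set (Polynomial ℂ))

/-- The image of y in A = ℂ[y]/(y⁴). -/
noncomputable def yA : TruncA :=
  Ideal.Quotient.mk _ (X : Polynomial ℂ)

/-- Evaluation at y = 0 of elements of A = ℂ[y]/(y⁴). -/
noncomputable def evY0 : TruncA →ₐ[ℂ] ℂ :=
  Ideal.Quotient.liftₐ _ (Polynomial.aeval (0 : ℂ)) (by
    intro a ha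
    rw [Ideal.mem_span_singleton'] at ha
    obtain ⟨c, rfl⟩ := ha
    simp)

/-- The usual A-linear integral on A[x], with Π(x^k) = x^{k+1}/(k+1). -/
noncomputable def intX (f : Polynomial TruncA) : Polynomial TruncA :=
  f.sum fun n a => C ((((n : ℂ) + 1)⁻¹) • a) * X ^ (n + 1)

/-- The modified integral P(f) = Π(f) + f(0,0) y². -/
noncomputable def modInt (f : Polynomial TruncA) : Polynomial TruncA :=
  intX f + C (evY0 (f.coeff 0) • (yA ^ 2))

lemma natCastAlg (n : ℕ) : ((n : TruncA) + 1) = algebraMap ℂ TruncA ((n : ℂ) + 1) := by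
  push_cast; simp

lemma deriv_intX (f : Polynomial TruncA) : derivative (intX f) = f := by
  conv_rhs => rw [← Polynomial.sum_C_mul_X_pow_eq f]
  rw [intX, Polynomial.sum_def, Polynomial.sum_def, map_sum]
  refine Finset.sum_congr rfl fun n _ => ?_
  rw [derivative_C_mul, derivative_X_pow]
  simp only [Nat.add_sub_cancel, Nat.cast_add, Nat.cast_one]
  rw [← mul_assoc, ← C_mul, natCastAlg, ← Algebra.commutes, ← Algebra.smul_def, smul_smul,
    mul_inv_cancel₀ (Nat.cast_add_one_ne_zero n), one_smul]

lemma deriv_modInt (f : Polynomial TruncA) : derivative (modInt f) = f := by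
  rw [modInt, map_add, deriv_intX, derivative_C, add_zero]

lemma coeff_zero_intX (f : Polynomial TruncA) : (intX f).coeff 0 = 0 := by
  rw [intX, Polynomial.sum_def, finset_sum_coeff]
  refine Finset.sum_eq_zero fun n _ => ?_
  simp [coeff_C_mul, coeff_X_pow]

lemma coeff_zero_modInt (f : Polynomial TruncA) :
    (modInt f).coeff 0 = evY0 (f.coeff 0) • yA ^ 2 := by
  simp [modInt, coeff_zero_intX]

lemma evY0_yA : evY0 yA = 0 := by
  simp [evY0, yA]

lemma yA4 : yA ^ 4 = 0 := by
  rw [yA, ← map_pow, Ideal.Quotient.eq_zero_iff_mem]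
  exact Ideal.subset_span rfl

lemma yA3 : yA ^ 3 ≠ 0 := by
  rw [yA, ← map_pow, Ne, Ideal.Quotient.eq_zero_iff_mem, Ideal.mem_span_singleton]
  intro h
  have := Polynomial.natDegree_le_of_dvd h (pow_ne_zero 3 X_ne_zero)
  simp [natDegree_X_pow] at this

lemma eq_of_deriv (p q : Polynomial TruncA) (h1 : derivative p = derivative q)
    (h2 : p.coeff 0 = q.coeff 0) : p = q := by
  ext n
  cases n with
  | zero => exact h2
  | succ n =>
    have := congrArg (fun r => Polynomial.coeff r n) h1
    simp only [coeff_derivative] at this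
    have hu : IsUnit ((n : TruncA) + 1) := by
      rw [natCastAlg]
      exact (isUnit_iff_ne_zero.2 (Nat.cast_add_one_ne_zero n)).map (algebraMap ℂ TruncA)
    exact hu.mul_right_cancel (by exact_mod_cast this)

lemma intX_C (a : TruncA) : intX (C a) = C a * X := by
  rw [intX, Polynomial.sum_C_index] <;> simp

lemma modInt_C (a : TruncA) : modInt (C a) = C a * X + C (evY0 a • yA ^ 2) := by
  rw [modInt, intX_C, coeff_C_zero]

lemma modInt_one : modInt 1 = X + C (yA ^ 2) := by
  rw [← C_1, modInt_C]; simp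

lemma modInt_zero : modInt 0 = 0 := by
  rw [← C_0, modInt_C]; simp

lemma modInt_yA : modInt (C yA) = C yA * X := by
  rw [modInt_C, evY0_yA]; simp

/-- (A[x], d, P) is a differential Rota-Baxter algebra of weight 0 but not an
integro-differential algebra: the hybrid Rota-Baxter axiom fails for
(x, y), the difference being y³. -/
theorem stmt_19 :
    (∀ f : Polynomial TruncA, derivative (modInt f) = f) ∧
    (∀ f g : Polynomial TruncA,
      modInt f * modInt g = modInt (f * modInt g) + modInt (modInt f * g)) ∧
    modInt (derivative (X : Polynomial TruncA)) * modInt (derivative (C yA))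
      ≠ modInt (derivative (X : Polynomial TruncA)) * C yA
        + X * modInt (derivative (C yA))
        - modInt (derivative ((X : Polynomial TruncA) * C yA)) ∧
    (modInt (derivative (X : Polynomial TruncA)) * C yA
        + X * modInt (derivative (C yA))
        - modInt (derivative ((X : Polynomial TruncA) * C yA)))
      - modInt (derivative (X : Polynomial TruncA)) * modInt (derivative (C yA))
      = C (yA ^ 3) := by
  have h4 : (modInt (derivative (X : Polynomial TruncA)) * C yA
        + X * modInt (derivative (C yA))
        - modInt (derivative ((X : Polynomial TruncA) * C yA)))
      - modInt (derivative (X : Polynomial TruncA)) * modInt (derivative (C yA))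
      = C (yA ^ 3) := by
    rw [derivative_X, derivative_C, derivative_mul, derivative_X, derivative_C, mul_zero,
      add_zero, one_mul, modInt_one, modInt_zero, modInt_yA]
    ring_nf
    rw [← C_mul, ← pow_succ]; norm_num
  refine ⟨deriv_modInt, ?_, ?_, h4⟩
  · intro f g
    refine eq_of_deriv _ _ ?_ ?_
    · rw [derivative_mul, deriv_modInt, deriv_modInt, map_add, deriv_modInt, deriv_modInt]
    · simp only [mul_coeff_zero, coeff_add, coeff_zero_modInt, mul_coeff_zero,
        map_mul, map_smul, map_pow, evY0_yA, smul_eq_mul]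
      rw [smul_mul_smul_comm, ← pow_add, yA4, smul_zero]
      simp
  · intro h
    rw [← h, sub_self] at h4
    exact yA3 (C_eq_zero.mp h4.symm)
end
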